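/- arXiv:1803.08808 — 4 statements merged into one kernel-verified Lean document; each statement's English description precedes it below -/
import Mathlib

section
/- Let k be a field, C a small category, and D a full subcategory of C that is an ideal, i.e., for every morphism y → x in C with x an object of D, y is also an object of D. Then the restriction functor from functors C → Vect_k to functors D → Vect_k, given by precomposition with the inclusion D ↪ C, sends projective objects to projective objects. -/
open CategoryTheory CategoryTheory.Limits

section Aux

variable {k : Type} [Field k]

lemma homext_to_punit {M N : ModuleCat.{0} k} (hN : N = ModuleCat.of k PUnit)
    (f g : M ⟶ N) : f = g := by
  subst hN
  exact ModuleCat.hom_ext (LinearMap.ext fun x => Subsingleton.elim _ _)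

lemma homext_from_punit {M N : ModuleCat.{0} k} (hM : M = ModuleCat.of k PUnit)
    (f g : M ⟶ N) : f = g := by
  subst hM
  refine ModuleCat.hom_ext (LinearMap.ext fun x => ?_)
  have hx : x = 0 := Subsingleton.elim _ _
  simp [hx]

variable {C : Type} [SmallCategory C] {Z : C → Prop}

open Classical in
noncomputable def extObj (F : ObjectProperty.FullSubcategory Z ⥤ ModuleCat.{0} k) (c : C) :
    ModuleCat.{0} k :=
  if h : Z c then F.obj ⟨c, h⟩ else ModuleCat.of k PUnit

lemma extObj_pos (F : ObjectProperty.FullSubcategory Z ⥤ ModuleCat.{0} k) {c : C} (h : Z c) :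
    extObj F c = F.obj ⟨c, h⟩ := dif_pos h

lemma extObj_neg (F : ObjectProperty.FullSubcategory Z ⥤ ModuleCat.{0} k) {c : C} (h : ¬ Z c) :
    extObj F c = ModuleCat.of k PUnit := dif_neg h

variable (hIdeal : ∀ (x y : C), (y ⟶ x) → Z x → Z y)

open Classical in
/-- Extension by zero of a functor on the full subcategory. -/
@[reducible] noncomputable def extZero (F : ObjectProperty.FullSubcategory Z ⥤ ModuleCat.{0} k) :
    C ⥤ ModuleCat.{0} k where
  obj c := extObj F c
  map {c c'} f :=
    if h' : Z c' then
      eqToHom (extObj_pos F (hIdeal c' c f h')) ≫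
        F.map (X := ⟨c, hIdeal c' c f h'⟩) (Y := ⟨c', h'⟩) (ObjectProperty.homMk f) ≫ eqToHom (extObj_pos F h').symm
    else 0
  map_id c := by
    by_cases h : Z c
    · rw [dif_pos h]
      have hid : F.map (X := ⟨c, h⟩) (Y := ⟨c, h⟩) (ObjectProperty.homMk (𝟙 c)) = 𝟙 _ := F.map_id _
      rw [hid]
      simp
    · exact homext_to_punit (extObj_neg F h) _ _
  map_comp {c c' c''} f g := by
    by_cases h'' : Z c''
    · have h' : Z c' := hIdeal c'' c' g h''
      have h : Z c := hIdeal c' c f h'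
      rw [dif_pos h'', dif_pos h'', dif_pos h']
      show eqToHom (extObj_pos F h) ≫
          F.map (CategoryStruct.comp (X := (⟨c, h⟩ : ObjectProperty.FullSubcategory Z))
            (Y := (⟨c', h'⟩ : ObjectProperty.FullSubcategory Z)) (Z := (⟨c'', h''⟩ : ObjectProperty.FullSubcategory Z)) (ObjectProperty.homMk f) (ObjectProperty.homMk g)) ≫
          eqToHom (extObj_pos F h'').symm = _
      rw [F.map_comp]
      simp
    · rw [dif_neg h'', dif_neg h'']
      simp

open Classical in
/-- Extension by zero of a natural transformation. -/
noncomputable def extZeroMap {E X : ObjectProperty.FullSubcategory Z ⥤ ModuleCat.{0} k} (η : E ⟶ X) :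
    extZero hIdeal E ⟶ extZero hIdeal X where
  app c :=
    if h : Z c then
      eqToHom (extObj_pos E h) ≫ η.app ⟨c, h⟩ ≫ eqToHom (extObj_pos X h).symm
    else 0
  naturality {c c'} f := by
    by_cases h' : Z c'
    · have h : Z c := hIdeal c' c f h'
      show (extZero hIdeal E).map f ≫ _ = _ ≫ (extZero hIdeal X).map f
      rw [show (extZero hIdeal E).map f =
        eqToHom (extObj_pos E h) ≫ E.map (X := ⟨c, h⟩) (Y := ⟨c', h'⟩) (ObjectProperty.homMk f) ≫
          eqToHom (extObj_pos E h').symm from dif_pos h']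
      rw [show (extZero hIdeal X).map f =
        eqToHom (extObj_pos X h) ≫ X.map (X := ⟨c, h⟩) (Y := ⟨c', h'⟩) (ObjectProperty.homMk f) ≫
          eqToHom (extObj_pos X h').symm from dif_pos h']
      rw [dif_pos h', dif_pos h]
      have hnat : E.map (X := ⟨c, h⟩) (Y := ⟨c', h'⟩) (ObjectProperty.homMk f) ≫ η.app ⟨c', h'⟩ =
          η.app ⟨c, h⟩ ≫ X.map (X := ⟨c, h⟩) (Y := ⟨c', h'⟩) (ObjectProperty.homMk f) := η.naturality _
      simp [reassoc_of% hnat]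
    · rw [dif_neg h']
      rw [show (extZero hIdeal X).map f = 0 from dif_neg h']
      simp

end Aux

theorem restriction_to_ideal_preserves_projectives (k : Type) [Field k]
    (C : Type) [SmallCategory C] (Z : C → Prop)
    (hIdeal : ∀ (x y : C), (y ⟶ x) → Z x → Z y)
    (P : C ⥤ ModuleCat.{0} k) (hP : Projective P) :
    Projective (ObjectProperty.ι Z ⋙ P) := by
  classical
  constructor
  intro E X f e he
  -- the map P ⟶ extZero X corresponding to f
  let f' : P ⟶ extZero hIdeal X :=
    { app := fun c =>
        if h : Z c then f.app ⟨c, h⟩ ≫ eqToHom (extObj_pos X h).symm else 0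
      naturality := by
        intro c c' g
        by_cases h' : Z c'
        · have h : Z c := hIdeal c' c g h'
          rw [dif_pos h', dif_pos h]
          rw [show (extZero hIdeal X).map g =
            eqToHom (extObj_pos X h) ≫ X.map (X := ⟨c, h⟩) (Y := ⟨c', h'⟩) (ObjectProperty.homMk g) ≫
              eqToHom (extObj_pos X h').symm from dif_pos h']
          have hnat : P.map g ≫ f.app ⟨c', h'⟩ =
              f.app ⟨c, h⟩ ≫ X.map (X := ⟨c, h⟩) (Y := ⟨c', h'⟩) (ObjectProperty.homMk g) :=
            f.naturality (X := ⟨c, h⟩) (Y := ⟨c', h'⟩) (ObjectProperty.homMk g)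
          simp [reassoc_of% hnat]
        · rw [dif_neg h']
          rw [show (extZero hIdeal X).map g = 0 from dif_neg h']
          simp }
  have hepi : Epi (extZeroMap hIdeal e) := by
    rw [NatTrans.epi_iff_epi_app]
    intro c
    by_cases h : Z c
    · have : Epi (e.app ⟨c, h⟩) := (NatTrans.epi_iff_epi_app e).mp he _
      rw [show (extZeroMap hIdeal e).app c =
        eqToHom (extObj_pos E h) ≫ e.app ⟨c, h⟩ ≫ eqToHom (extObj_pos X h).symm
        from dif_pos h]
      exact epi_comp' inferInstance (epi_comp' this inferInstance)
    · exact ⟨fun g₁ g₂ _ => homext_from_punit (extObj_neg X h) g₁ g₂⟩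
  obtain ⟨g, hg⟩ := hP.factors f' (extZeroMap hIdeal e)
  refine ⟨{ app := fun d => g.app d.1 ≫ eqToHom (extObj_pos E d.2), naturality := ?_ }, ?_⟩
  · intro d d' φ
    have hnat : P.map φ.hom ≫ g.app d'.1 = g.app d.1 ≫ (extZero hIdeal E).map φ.hom :=
      g.naturality φ.hom
    rw [show (extZero hIdeal E).map φ.hom =
      eqToHom (extObj_pos E d.2) ≫ E.map (X := ⟨d.1, d.2⟩) (Y := ⟨d'.1, d'.2⟩) φ ≫
        eqToHom (extObj_pos E d'.2).symm from dif_pos d'.2] at hnat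
    simp [reassoc_of% hnat]
  · ext d : 2
    have hd := congrArg (fun (τ : P ⟶ extZero hIdeal X) => τ.app d.1) hg
    simp only [NatTrans.comp_app] at hd
    rw [show (extZeroMap hIdeal e).app d.1 =
      eqToHom (extObj_pos E d.2) ≫ e.app ⟨d.1, d.2⟩ ≫ eqToHom (extObj_pos X d.2).symm
      from dif_pos d.2] at hd
    rw [show f'.app d.1 = f.app ⟨d.1, d.2⟩ ≫ eqToHom (extObj_pos X d.2).symm from dif_pos d.2] at hd
    have h2 := congrArg (fun (u : P.obj d.1 ⟶ extObj X d.1) => u ≫ eqToHom (extObj_pos X d.2)) hd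
    simp only [Category.assoc, eqToHom_trans, eqToHom_refl, Category.comp_id] at h2
    simpa using h2
end

section
/- Let k be a field, C a small category, and D a full subcategory of C that is an ideal, i.e., for every morphism y → x in C with x an object of D, y is also an object of D. Let W be a functor C → Vect_k and let ⋯ → P^1 → P^0 → W → 0 be a projective resolution in the category of functors C → Vect_k. Then its restriction ⋯ → RP^1 → RP^0 → RW → 0 is a projective resolution of RW in the category of functors D → Vect_k. -/
open CategoryTheory CategoryTheory.Limits

namespace RestrictIdealAux

variable {k : Type} [Field k] {C : Type} [SmallCategory C] {Z : C → Prop}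

/-- Extension by zero of a functor on the full subcategory of an ideal. -/
@[simps]
noncomputable def ext (hIdeal : ∀ (x y : C), (y ⟶ x) → Z x → Z y)
    (X : ObjectProperty.FullSubcategory Z ⥤ ModuleCat.{0} k) : C ⥤ ModuleCat.{0} k where
  obj x := ModuleCat.of k (∀ h : PLift (Z x), X.obj ⟨x, h.down⟩)
  map {a b} f :=
    ModuleCat.ofHom
    { toFun := fun v hb =>
        X.map (ObjectProperty.homMk (P := Z) (X := ⟨a, hIdeal b a f hb.down⟩) (Y := ⟨b, hb.down⟩) f)
          (v ⟨hIdeal b a f hb.down⟩)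
      map_add' := fun v w => by funext hb; exact map_add _ _ _
      map_smul' := fun c v => by funext hb; exact map_smul _ _ _ }
  map_id a := by
    refine ModuleCat.hom_ext (LinearMap.ext fun v => ?_)
    funext ha
    show X.map (𝟙 (⟨a, ha.down⟩ : ObjectProperty.FullSubcategory Z)) (v ha) = v ha
    rw [X.map_id]
    rfl
  map_comp {a b c} f g := by
    refine ModuleCat.hom_ext (LinearMap.ext fun v => ?_)
    funext hc
    show X.map
        ((ObjectProperty.homMk (P := Z) (X := ⟨a, hIdeal b a f (hIdeal c b g hc.down)⟩) (Y := ⟨b, hIdeal c b g hc.down⟩) f) ≫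
          (ObjectProperty.homMk (P := Z) (X := ⟨b, hIdeal c b g hc.down⟩) (Y := ⟨c, hc.down⟩) g))
        (v ⟨hIdeal b a f (hIdeal c b g hc.down)⟩) =
      X.map (ObjectProperty.homMk (P := Z) (X := ⟨b, hIdeal c b g hc.down⟩) (Y := ⟨c, hc.down⟩) g)
        (X.map (ObjectProperty.homMk (P := Z) (X := ⟨a, hIdeal b a f (hIdeal c b g hc.down)⟩) (Y := ⟨b, hIdeal c b g hc.down⟩) f) (v ⟨hIdeal b a f (hIdeal c b g hc.down)⟩))
    rw [X.map_comp]
    rfl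


/-- Extension by zero of a morphism. -/
noncomputable def extHom (hIdeal : ∀ (x y : C), (y ⟶ x) → Z x → Z y)
    {X Y : ObjectProperty.FullSubcategory Z ⥤ ModuleCat.{0} k} (g : X ⟶ Y) :
    ext hIdeal X ⟶ ext hIdeal Y where
  app x :=
    ModuleCat.ofHom
    { toFun := fun v h => g.app ⟨x, h.down⟩ (v h)
      map_add' := fun v w => by funext h; exact map_add _ _ _
      map_smul' := fun c v => by funext h; exact map_smul _ _ _ }
  naturality {a b} f := by
    ext v
    funext hb
    exact ConcreteCategory.congr_hom
      (g.naturality (ObjectProperty.homMk (P := Z) (X := ⟨a, hIdeal b a f hb.down⟩) (Y := ⟨b, hb.down⟩) f))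
      (v ⟨hIdeal b a f hb.down⟩)

/-- A morphism from a restriction corresponds to a morphism into the extension by zero. -/
noncomputable def toExt (hIdeal : ∀ (x y : C), (y ⟶ x) → Z x → Z y)
    {Q : C ⥤ ModuleCat.{0} k} {Y : ObjectProperty.FullSubcategory Z ⥤ ModuleCat.{0} k}
    (f : ObjectProperty.ι Z ⋙ Q ⟶ Y) : Q ⟶ ext hIdeal Y where
  app x :=
    ModuleCat.ofHom
    { toFun := fun p h => f.app ⟨x, h.down⟩ p
      map_add' := fun p q => by funext h; exact map_add _ _ _
      map_smul' := fun c p => by funext h; exact map_smul _ _ _ }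
  naturality {a b} u := by
    ext p
    funext hb
    exact ConcreteCategory.congr_hom
      (f.naturality (ObjectProperty.homMk (P := Z) (X := ⟨a, hIdeal b a u hb.down⟩) (Y := ⟨b, hb.down⟩) u)) p

/-- A morphism into the extension by zero restricts to a morphism of restrictions. -/
noncomputable def fromExt (hIdeal : ∀ (x y : C), (y ⟶ x) → Z x → Z y)
    {Q : C ⥤ ModuleCat.{0} k} {X : ObjectProperty.FullSubcategory Z ⥤ ModuleCat.{0} k}
    (L : Q ⟶ ext hIdeal X) : ObjectProperty.ι Z ⋙ Q ⟶ X where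
  app x :=
    ModuleCat.ofHom
    { toFun := fun p => L.app x.1 p ⟨x.2⟩
      map_add' := fun p q => congrFun (map_add (L.app x.1).hom p q) ⟨x.2⟩
      map_smul' := fun c p => congrFun (map_smul (L.app x.1).hom c p) ⟨x.2⟩ }
  naturality {a b} u := by
    ext p : 2
    have h1 := ConcreteCategory.congr_hom (L.naturality u.hom) p
    have h2 : L.app b.1 (Q.map u.hom p) ⟨b.2⟩ = (ext hIdeal X).map u.hom (L.app a.1 p) ⟨b.2⟩ :=
      congrFun h1 ⟨b.2⟩
    show L.app b.1 (Q.map u.hom p) ⟨b.2⟩ = X.map u ((L.app a.1 p) ⟨a.2⟩)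
    exact h2

lemma epi_extHom (hIdeal : ∀ (x y : C), (y ⟶ x) → Z x → Z y)
    {X Y : ObjectProperty.FullSubcategory Z ⥤ ModuleCat.{0} k} (g : X ⟶ Y) [Epi g] :
    Epi (extHom hIdeal g) := by
  have happ : ∀ x : ObjectProperty.FullSubcategory Z, Epi (g.app x) :=
    (NatTrans.epi_iff_epi_app g).1 inferInstance
  have : ∀ c : C, Epi ((extHom hIdeal g).app c) := by
    intro c
    rw [ModuleCat.epi_iff_surjective]
    intro w
    have hsurj : ∀ h : PLift (Z c), Function.Surjective (g.app ⟨c, h.down⟩) := fun h =>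
      (ModuleCat.epi_iff_surjective _).1 (happ ⟨c, h.down⟩)
    refine ⟨fun h => Classical.choose (hsurj h (w h)), ?_⟩
    funext h
    exact Classical.choose_spec (hsurj h (w h))
  exact NatTrans.epi_of_epi_app _

lemma projective_restrict (hIdeal : ∀ (x y : C), (y ⟶ x) → Z x → Z y)
    (Q : C ⥤ ModuleCat.{0} k) [Projective Q] :
    Projective (ObjectProperty.ι Z ⋙ Q) where
  factors {X Y} f g hg := by
    have := epi_extHom hIdeal g
    obtain ⟨L, hL⟩ := Projective.factors (toExt hIdeal f) (extHom hIdeal g)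
    refine ⟨fromExt hIdeal L, ?_⟩
    ext x p
    have h1 := ConcreteCategory.congr_hom (congrFun (congrArg NatTrans.app hL) x.1) p
    show g.app x ((L.app x.1 p) ⟨x.2⟩) = f.app x p
    exact congrFun h1 ⟨x.2⟩

end RestrictIdealAux

theorem restriction_to_ideal_preserves_projective_resolutions (k : Type) [Field k]
    (C : Type) [SmallCategory C] (Z : C → Prop)
    (hIdeal : ∀ (x y : C), (y ⟶ x) → Z x → Z y)
    (W : C ⥤ ModuleCat.{0} k)
    (P : ℕ → (C ⥤ ModuleCat.{0} k))
    (d : ∀ s : ℕ, P (s + 1) ⟶ P s) (ε : P 0 ⟶ W)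
    (hproj : ∀ s, Projective (P s)) (hepi : Epi ε)
    (w0 : d 0 ≫ ε = 0) (w : ∀ s, d (s + 1) ≫ d s = 0)
    (hex0 : (ShortComplex.mk (d 0) ε w0).Exact)
    (hex : ∀ s, (ShortComplex.mk (d (s + 1)) (d s) (w s)).Exact) :
    -- the restriction to the full subcategory on `Z` is again a projective resolution
    (∀ s, Projective (ObjectProperty.ι Z ⋙ P s)) ∧
    Epi (Functor.whiskerLeft (ObjectProperty.ι Z) ε) ∧
    ∃ (w0' : Functor.whiskerLeft (ObjectProperty.ι Z) (d 0) ≫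
        Functor.whiskerLeft (ObjectProperty.ι Z) ε = 0)
      (w' : ∀ s, Functor.whiskerLeft (ObjectProperty.ι Z) (d (s + 1)) ≫
        Functor.whiskerLeft (ObjectProperty.ι Z) (d s) = 0),
      (ShortComplex.mk _ _ w0').Exact ∧ ∀ s, (ShortComplex.mk _ _ (w' s)).Exact := by
  classical
  let F := (Functor.whiskeringLeft (ObjectProperty.FullSubcategory Z) C (ModuleCat.{0} k)).obj
    (ObjectProperty.ι Z)
  have hF : ∀ {A B : C ⥤ ModuleCat.{0} k} (η : A ⟶ B),
      F.map η = Functor.whiskerLeft (ObjectProperty.ι Z) η := fun _ => rfl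
  haveI hFadd : F.Additive := ⟨by intros; ext x; rfl⟩
  refine ⟨?_, ?_, ?_, ?_, ?_, ?_⟩
  · intro s
    have := hproj s
    exact RestrictIdealAux.projective_restrict hIdeal (P s)
  · have happ : ∀ c : C, Epi (ε.app c) := (NatTrans.epi_iff_epi_app ε).1 hepi
    have : ∀ x : ObjectProperty.FullSubcategory Z,
        Epi ((Functor.whiskerLeft (ObjectProperty.ι Z) ε).app x) := fun x => happ x.1
    exact NatTrans.epi_of_epi_app _
  · rw [← hF, ← hF, ← F.map_comp, w0, F.map_zero]
  · intro s
    rw [← hF, ← hF, ← F.map_comp, w s, F.map_zero]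
  · exact hex0.map F
  · exact fun s => (hex s).map F
end

section
/- Let k be a field and n a natural number. Let FI be the category of finite sets of natural numbers and injective functions, and let FI_{≤n} be its full subcategory of sets of cardinality at most n. Let V be a finitely generated, pointwise finite-dimensional functor FI → Vect_k. If ⋯ → P^1 → P^0 → V → 0 is a minimal projective resolution in the category of functors FI → Vect_k, then its restriction ⋯ → RP^1 → RP^0 → RV → 0 is a minimal projective resolution of RV in the category of functors FI_{≤n} → Vect_k. -/
open CategoryTheory CategoryTheory.Limits

/-- Objects of the category `FI` : finite sets of natural numbers. -/
structure FIcat where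
  carrier : Finset ℕ

/-- The category `FI` : finite sets of natural numbers with injections between them. -/
instance : Category FIcat where
  Hom S T := { f : S.carrier → T.carrier // Function.Injective f }
  id S := ⟨id, fun _ _ h => h⟩
  comp f g := ⟨g.1 ∘ f.1, fun _ _ h => f.2 (g.2 h)⟩

/-- A subfunctor of a functor `V : C ⥤ ModuleCat k`. -/
structure Subfunctor {k : Type} [Field k] {C : Type*} [Category C]
    (V : C ⥤ ModuleCat.{0} k) where
  toFun : ∀ S : C, Submodule k (V.obj S)
  map_mem : ∀ {S T : C} (f : S ⟶ T) (v : V.obj S), v ∈ toFun S → V.map f v ∈ toFun T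

/-- A functor `V : C ⥤ ModuleCat k` is finitely generated if there are finitely many
elements `v i ∈ V (S i)` such that the only subfunctor of `V` containing all of them is
`V` itself. -/
def IsFinitelyGenerated {k : Type} [Field k] {C : Type*} [Category C]
    (V : C ⥤ ModuleCat.{0} k) : Prop :=
  ∃ (ι : Type) (_ : Finite ι) (S : ι → C) (v : ∀ i : ι, V.obj (S i)),
    ∀ W : Subfunctor V, (∀ i, v i ∈ W.toFun (S i)) → ∀ X, W.toFun X = ⊤

/-- `p : P ⟶ V` is a projective cover. -/
def IsProjectiveCover {A : Type*} [Category A] {P V : A} (p : P ⟶ V) : Prop :=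
  Projective P ∧ Epi p ∧ ∀ (Q : A) (g : Q ⟶ P), Epi (g ≫ p) → Epi g

/-- `⋯ → P 1 → P 0 → V → 0` is a minimal projective resolution : `ε : P 0 ⟶ V` is a
projective cover and, for each `s`, the induced map `P (s+1) ⟶ ker (P s ⟶ P (s-1))`
(with `P (-1) = V`) is a projective cover.  (This in particular forces the complex to be
exact, i.e. a projective resolution.) -/
def IsMinimalProjectiveResolution {A : Type*} [Category A] [Abelian A]
    (V : A) (P : ℕ → A) (d : ∀ s : ℕ, P (s + 1) ⟶ P s) (ε : P 0 ⟶ V) : Prop :=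
  ∃ (w0 : d 0 ≫ ε = 0) (w : ∀ s, d (s + 1) ≫ d s = 0),
    IsProjectiveCover ε ∧
    IsProjectiveCover (kernel.lift ε (d 0) w0) ∧
    ∀ s, IsProjectiveCover (kernel.lift (d s) (d (s + 1)) (w s))


section Aux
variable {k : Type} [Field k]
variable {C : Type} [SmallCategory C] {pred : C → Prop}

/-- view a morphism of `C` between objects of the full subcategory as a morphism there -/
def homOf {S T : C} (f : S ⟶ T) (hS : pred S) (hT : pred T) :
    (⟨S, hS⟩ : ObjectProperty.FullSubcategory pred) ⟶ ⟨T, hT⟩ := ObjectProperty.homMk f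

lemma homOf_comp {S T U : C} (f : S ⟶ T) (g : T ⟶ U) (hS hT hU) :
    homOf (pred := pred) (f ≫ g) hS hU = homOf f hS hT ≫ homOf g hT hU := rfl

lemma homOf_id {S : C} (hS : pred S) : homOf (pred := pred) (𝟙 S) hS hS = 𝟙 _ := rfl

variable (hpred : ∀ {S T : C}, (S ⟶ T) → pred T → pred S)

/-- extension by zero (via Pi over a lifted Prop) -/
noncomputable def ext0 (A : ObjectProperty.FullSubcategory pred ⥤ ModuleCat.{0} k) : C ⥤ ModuleCat.{0} k where
  obj S := ModuleCat.of k (∀ h : PLift (pred S), A.obj ⟨S, h.down⟩)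
  map {S T} f :=
    ModuleCat.ofHom
    { toFun := fun x hT => A.map (homOf f (hpred f hT.down) hT.down) (x ⟨hpred f hT.down⟩)
      map_add' := fun x y => funext fun hT => map_add (A.map _).hom _ _
      map_smul' := fun c x => funext fun hT => map_smul (A.map _).hom _ _ }
  map_id S := by
    refine ModuleCat.hom_ext (LinearMap.ext fun x => ?_)
    funext hT
    show A.map (homOf (𝟙 S) (hpred (𝟙 S) hT.down) hT.down) (x _) = x hT
    have : hpred (𝟙 S) hT.down = hT.down := rfl
    rw [show homOf (pred := pred) (𝟙 S) (hpred (𝟙 S) hT.down) hT.down = 𝟙 _ from rfl]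
    simp
  map_comp {S T U} f g := by
    refine ModuleCat.hom_ext (LinearMap.ext fun x => ?_)
    funext hU
    show A.map (homOf (f ≫ g) (hpred (f ≫ g) hU.down) hU.down) (x _) =
      A.map (homOf g (hpred g hU.down) hU.down)
        (A.map (homOf f (hpred f (hpred g hU.down)) (hpred g hU.down)) (x _))
    rw [homOf_comp f g _ (hpred g hU.down) _, A.map_comp]
    rfl

end Aux

section Aux2
variable {k : Type} [Field k]
variable {C : Type} [SmallCategory C] {pred : C → Prop}
  (hpred : ∀ {S T : C}, (S ⟶ T) → pred T → pred S)

/-- extension by zero of a morphism -/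
noncomputable def ext0hom {A B : ObjectProperty.FullSubcategory pred ⥤ ModuleCat.{0} k} (f : A ⟶ B) :
    ext0 hpred A ⟶ ext0 hpred B where
  app S :=
    ModuleCat.ofHom
    { toFun := fun x hS => f.app ⟨S, hS.down⟩ (x hS)
      map_add' := fun x y => funext fun hS => map_add (f.app _).hom _ _
      map_smul' := fun c x => funext fun hS => map_smul (f.app _).hom _ _ }
  naturality {S T} φ := by
    ext x
    funext hT
    show f.app ⟨T, hT.down⟩ (A.map (homOf φ _ hT.down) (x _)) =
      B.map (homOf φ (hpred φ hT.down) hT.down) (f.app ⟨S, hpred φ hT.down⟩ (x _))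
    exact ConcreteCategory.congr_hom (f.naturality (homOf φ (hpred φ hT.down) hT.down)) (x ⟨hpred φ hT.down⟩)

end Aux2

section Aux3
variable {k : Type} [Field k]
variable {C : Type} [SmallCategory C] {pred : C → Prop}
  (hpred : ∀ {S T : C}, (S ⟶ T) → pred T → pred S)

/-- transpose a map `ι ⋙ P ⟶ B` to `P ⟶ ext0 B` -/
noncomputable def toExt0 {P : C ⥤ ModuleCat.{0} k} {B : ObjectProperty.FullSubcategory pred ⥤ ModuleCat.{0} k}
    (h : ObjectProperty.ι pred ⋙ P ⟶ B) : P ⟶ ext0 hpred B where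
  app S :=
    ModuleCat.ofHom
    { toFun := fun x hS => h.app ⟨S, hS.down⟩ x
      map_add' := fun x y => funext fun hS => map_add (h.app _).hom _ _
      map_smul' := fun c x => funext fun hS => map_smul (h.app _).hom _ _ }
  naturality {S T} φ := by
    ext x
    funext hT
    show h.app ⟨T, hT.down⟩ (P.map φ x) =
      (ext0 hpred B).map φ (fun hS => h.app ⟨S, hS.down⟩ x) hT
    show h.app ⟨T, hT.down⟩ (P.map φ x) =
      B.map (homOf φ (hpred φ hT.down) hT.down) (h.app ⟨S, hpred φ hT.down⟩ x)
    exact ConcreteCategory.congr_hom (h.naturality (homOf φ (hpred φ hT.down) hT.down)) x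

/-- transpose a map `P ⟶ ext0 A` to `ι ⋙ P ⟶ A` -/
noncomputable def fromExt0 {P : C ⥤ ModuleCat.{0} k} {A : ObjectProperty.FullSubcategory pred ⥤ ModuleCat.{0} k}
    (l : P ⟶ ext0 hpred A) : ObjectProperty.ι pred ⋙ P ⟶ A where
  app X :=
    ModuleCat.ofHom
    { toFun := fun x => l.app X.obj x ⟨X.property⟩
      map_add' := fun x y => by
        show l.app X.obj (x + y) ⟨X.property⟩ = _
        rw [map_add (l.app X.obj).hom]; rfl
      map_smul' := fun c x => by
        show l.app X.obj (c • x) ⟨X.property⟩ = _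
        rw [map_smul (l.app X.obj).hom]; rfl }
  naturality {X Y} φ := by
    ext x
    show l.app Y.obj (P.map φ.hom x) ⟨Y.property⟩ = A.map φ (l.app X.obj x ⟨X.property⟩)
    have := ConcreteCategory.congr_hom (l.naturality φ.hom) x
    have h2 := congrFun this (⟨Y.property⟩ : PLift (pred Y.obj))
    exact h2

end Aux3

section Aux4
variable {k : Type} [Field k]
variable {C : Type} [SmallCategory C] {pred : C → Prop}

theorem projective_restrict (hpred : ∀ {S T : C}, (S ⟶ T) → pred T → pred S)
    (P : C ⥤ ModuleCat.{0} k) (hP : Projective P) :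
    Projective (ObjectProperty.ι pred ⋙ P) where
  factors {E X} f e he := by
    have hsurj : ∀ Y, Function.Surjective (e.app Y) := fun Y =>
      (ModuleCat.epi_iff_surjective _).1 ((NatTrans.epi_iff_epi_app e).1 he Y)
    haveI hepi : Epi (ext0hom hpred e) := by
      rw [NatTrans.epi_iff_epi_app]
      intro S
      rw [ModuleCat.epi_iff_surjective]
      intro y
      refine ⟨fun hS => Classical.choose (hsurj ⟨S, hS.down⟩ (y hS)), ?_⟩
      funext hS
      exact Classical.choose_spec (hsurj ⟨S, hS.down⟩ (y hS))
    obtain ⟨l, hl⟩ := hP.factors (toExt0 hpred f) (ext0hom hpred e)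
    refine ⟨fromExt0 hpred l, ?_⟩
    ext X x
    show e.app X (l.app X.obj x ⟨X.property⟩) = f.app X x
    have h1 := ConcreteCategory.congr_hom (congrArg (fun t => NatTrans.app t X.obj) hl) x
    exact congrFun h1 ⟨X.property⟩

end Aux4

section Aux5
variable {k : Type} [Field k]
variable {C : Type} [SmallCategory C] {pred : C → Prop}

theorem restrict_superfluous (hpred : ∀ {S T : C}, (S ⟶ T) → pred T → pred S)
    {A B : C ⥤ ModuleCat.{0} k} (p : A ⟶ B) (hepi : Epi p)
    (hsup : ∀ (Q : C ⥤ ModuleCat.{0} k) (g : Q ⟶ A), Epi (g ≫ p) → Epi g)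
    (Q' : ObjectProperty.FullSubcategory pred ⥤ ModuleCat.{0} k)
    (g : Q' ⟶ ObjectProperty.ι pred ⋙ A)
    (hg : Epi (g ≫ Functor.whiskerLeft (ObjectProperty.ι pred) p)) : Epi g := by
  classical
  set M : ∀ S : C, Submodule k (A.obj S) :=
    fun S => ⨅ h : pred S, LinearMap.range (g.app ⟨S, h⟩).hom with hM
  have hmaps : ∀ {S T : C} (f : S ⟶ T), ∀ x ∈ M S, A.map f x ∈ M T := by
    intro S T f x hx
    rw [Submodule.mem_iInf]
    intro hT
    have hS := hpred f hT
    rw [Submodule.mem_iInf] at hx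
    obtain ⟨q, hq⟩ := hx hS
    refine ⟨Q'.map (homOf f hS hT) q, ?_⟩
    have hnat := ConcreteCategory.congr_hom (g.naturality (homOf f hS hT)) q
    exact hnat.trans (congrArg (A.map f) hq)
  let W : C ⥤ ModuleCat.{0} k :=
    { obj := fun S => ModuleCat.of k (M S)
      map := fun {S T} f => ModuleCat.ofHom ((A.map f).hom.restrict (hmaps f))
      map_id := fun S => by
        ext x
        show A.map (𝟙 S) x.1 = x.1
        simp
      map_comp := fun {S T U} f f' => by
        ext x
        show A.map (f ≫ f') x.1 = A.map f' (A.map f x.1)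
        simp }
  let gW : W ⟶ A :=
    { app := fun S => ModuleCat.ofHom (M S).subtype
      naturality := fun {S T} f => by
        ext x
        show A.map f x.1 = A.map f x.1
        rfl }
  have hWepi : Epi (gW ≫ p) := by
    rw [NatTrans.epi_iff_epi_app]
    intro S
    rw [ModuleCat.epi_iff_surjective]
    intro y
    by_cases hS : pred S
    · have hsurj : Function.Surjective
          ((g ≫ Functor.whiskerLeft (ObjectProperty.ι pred) p).app ⟨S, hS⟩) :=
        (ModuleCat.epi_iff_surjective _).1 ((NatTrans.epi_iff_epi_app _).1 hg ⟨S, hS⟩)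
      obtain ⟨q, hq⟩ := hsurj y
      refine ⟨⟨g.app ⟨S, hS⟩ q, ?_⟩, hq⟩
      rw [Submodule.mem_iInf]
      exact fun h => ⟨q, rfl⟩
    · have hpsurj : Function.Surjective (p.app S) :=
        (ModuleCat.epi_iff_surjective _).1 ((NatTrans.epi_iff_epi_app _).1 hepi S)
      obtain ⟨a, ha⟩ := hpsurj y
      refine ⟨⟨a, ?_⟩, ha⟩
      rw [Submodule.mem_iInf]
      exact fun h => absurd h hS
  have hgWepi : Epi gW := hsup W gW hWepi
  rw [NatTrans.epi_iff_epi_app]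
  intro X
  rw [ModuleCat.epi_iff_surjective]
  intro y
  have hsurj : Function.Surjective (gW.app X.obj) :=
    (ModuleCat.epi_iff_surjective _).1 ((NatTrans.epi_iff_epi_app _).1 hgWepi X.obj)
  obtain ⟨x, hx⟩ := hsurj y
  have hmem := x.2
  rw [Submodule.mem_iInf] at hmem
  obtain ⟨q, hq⟩ := hmem X.property
  exact ⟨q, hq.trans hx⟩

end Aux5

section Aux6
variable {k : Type} [Field k]
variable {C : Type} [SmallCategory C] {pred : C → Prop}

theorem epi_whisk {A B : C ⥤ ModuleCat.{0} k} (p : A ⟶ B) (h : Epi p) :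
    Epi (Functor.whiskerLeft (ObjectProperty.ι pred) p) := by
  rw [NatTrans.epi_iff_epi_app]
  intro X
  exact (NatTrans.epi_iff_epi_app p).1 h X.obj

theorem cover_restrict (hpred : ∀ {S T : C}, (S ⟶ T) → pred T → pred S)
    {A B : C ⥤ ModuleCat.{0} k} (p : A ⟶ B) (h : IsProjectiveCover p) :
    IsProjectiveCover (Functor.whiskerLeft (ObjectProperty.ι pred) p) :=
  ⟨projective_restrict hpred A h.1, epi_whisk p h.2.1,
    fun Q g hg => restrict_superfluous hpred p h.2.1 h.2.2 Q g hg⟩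

theorem cover_restrict_kernel (hpred : ∀ {S T : C}, (S ⟶ T) → pred T → pred S)
    {A B X : C ⥤ ModuleCat.{0} k} (f : A ⟶ B) (q : X ⟶ A) (w : q ≫ f = 0)
    (w' : Functor.whiskerLeft (ObjectProperty.ι pred) q ≫
      Functor.whiskerLeft (ObjectProperty.ι pred) f = 0)
    (h : IsProjectiveCover (kernel.lift f q w)) :
    IsProjectiveCover (kernel.lift (Functor.whiskerLeft (ObjectProperty.ι pred) f)
      (Functor.whiskerLeft (ObjectProperty.ι pred) q) w') := by
  set ι := ObjectProperty.ι pred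
  set R := (Functor.whiskeringLeft (ObjectProperty.FullSubcategory pred) C (ModuleCat.{0} k)).obj ι with hR
  haveI hiso : IsIso (kernelComparison f R) := by
    rw [← PreservesKernel.iso_hom]; infer_instance
  set l := kernel.lift f q w with hldef
  have hθι : kernelComparison f R ≫ kernel.ι (Functor.whiskerLeft ι f) = Functor.whiskerLeft ι (kernel.ι f) :=
    kernelComparison_comp_ι f R
  have heq : kernel.lift (Functor.whiskerLeft ι f) (Functor.whiskerLeft ι q) w' =
      Functor.whiskerLeft ι l ≫ kernelComparison f R := by
    rw [← cancel_mono (kernel.ι (Functor.whiskerLeft ι f))]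
    rw [kernel.lift_ι, Category.assoc, hθι]
    rw [← Functor.whiskerLeft_comp, kernel.lift_ι]
  refine ⟨projective_restrict hpred X h.1, ?_, ?_⟩
  · rw [heq]
    haveI : Epi (Functor.whiskerLeft ι l) := epi_whisk (pred := pred) l h.2.1
    exact epi_comp _ _
  · intro Q g hg
    rw [heq, ← Category.assoc] at hg
    have h2 : Epi (g ≫ Functor.whiskerLeft ι l) := by
      have h3 : Epi (((g ≫ Functor.whiskerLeft ι l) ≫ kernelComparison f R) ≫
          inv (kernelComparison f R)) := epi_comp _ _
      rwa [Category.assoc, IsIso.hom_inv_id, Category.comp_id] at h3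
    exact restrict_superfluous hpred l h.2.1 h.2.2 Q g h2

end Aux6

theorem restriction_preserves_minimal_projective_resolutions (k : Type) [Field k] (n : ℕ)
    (V : FIcat ⥤ ModuleCat.{0} k)
    (hfd : ∀ S : FIcat, FiniteDimensional k (V.obj S))
    (hfg : IsFinitelyGenerated V)
    (P : ℕ → (FIcat ⥤ ModuleCat.{0} k)) (d : ∀ s : ℕ, P (s + 1) ⟶ P s) (ε : P 0 ⟶ V)
    (hmin : IsMinimalProjectiveResolution V P d ε) :
    IsMinimalProjectiveResolution
      (ObjectProperty.ι (fun S : FIcat => S.carrier.card ≤ n) ⋙ V)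
      (fun s => ObjectProperty.ι (fun S : FIcat => S.carrier.card ≤ n) ⋙ P s)
      (fun s => Functor.whiskerLeft (ObjectProperty.ι fun S : FIcat => S.carrier.card ≤ n) (d s))
      (Functor.whiskerLeft (ObjectProperty.ι fun S : FIcat => S.carrier.card ≤ n) ε) := by
  obtain ⟨w0, w, hε, h0, hs⟩ := hmin
  have hpred : ∀ {S T : FIcat}, (S ⟶ T) → T.carrier.card ≤ n → S.carrier.card ≤ n := by
    intro S T f hT
    refine le_trans ?_ hT
    have h1 := Fintype.card_le_of_injective f.1 f.2
    simpa [Fintype.card_coe] using h1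
  refine ⟨?_, ?_, ?_, ?_, ?_⟩
  · rw [← Functor.whiskerLeft_comp, w0]
    ext X
    rfl
  · intro s
    rw [← Functor.whiskerLeft_comp, w s]
    ext X
    rfl
  · exact cover_restrict hpred ε hε
  · exact cover_restrict_kernel hpred ε (d 0) w0 _ h0
  · intro s
    exact cover_restrict_kernel hpred (d s) (d (s + 1)) (w s) _ (hs s)
end

section
/- Let k be a field and m ≥ 1 a natural number. For the category FI of finite sets of natural numbers and injections, let P_m denote the projective FI-module sending a finite set S to the free k-vector space on the set of injections from {1,…,m} to S, and let Σ denote the shift functor given by precomposition with the self-embedding of FI that adds one new point to every object (and extends every injection by fixing the new point). Then there is an isomorphism of FI-modules Σ P_m ≅ P_m ⊕ (P_{m−1})^{⊕ m}. -/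
open CategoryTheory CategoryTheory.Limits

def newPt (S : FIcat) : ℕ := S.carrier.sup id + 1

theorem newPt_not_mem (S : FIcat) : newPt S ∉ S.carrier := by
  intro h
  have := Finset.le_sup (f := id) h
  simp only [id_eq, newPt] at this h ⊢
  omega

/-- The underlying function of the extension of `f : S ⟶ T` to `S ⊔ {∗} → T ⊔ {∗}`. -/
def embMap {S T : FIcat} (f : S ⟶ T)
    (x : {a : ℕ // a ∈ insert (newPt S) S.carrier}) :
    {a : ℕ // a ∈ insert (newPt T) T.carrier} :=
  if h : x.1 ∈ S.carrier then
    ⟨(f.1 ⟨x.1, h⟩).1, Finset.mem_insert_of_mem (f.1 ⟨x.1, h⟩).2⟩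
  else ⟨newPt T, Finset.mem_insert_self _ _⟩

theorem embMap_val_mem {S T : FIcat} (f : S ⟶ T) (x) (h : x.1 ∈ S.carrier) :
    (embMap f x).1 = (f.1 ⟨x.1, h⟩).1 := by
  rw [embMap, dif_pos h]

theorem embMap_val_not_mem {S T : FIcat} (f : S ⟶ T) (x) (h : x.1 ∉ S.carrier) :
    (embMap f x).1 = newPt T := by
  rw [embMap, dif_neg h]

theorem embMap_injective {S T : FIcat} (f : S ⟶ T) : Function.Injective (embMap f) := by
  intro x y hxy
  have hval : (embMap f x).1 = (embMap f y).1 := congrArg Subtype.val hxy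
  by_cases hx : x.1 ∈ S.carrier <;> by_cases hy : y.1 ∈ S.carrier
  · rw [embMap_val_mem f x hx, embMap_val_mem f y hy] at hval
    have h1 : ((x : ℕ)) = (y : ℕ) := Subtype.mk_eq_mk.mp (f.2 (Subtype.ext hval))
    exact Subtype.ext h1
  · rw [embMap_val_mem f x hx, embMap_val_not_mem f y hy] at hval
    exact absurd (hval ▸ (f.1 ⟨x.1, hx⟩).2) (newPt_not_mem T)
  · rw [embMap_val_not_mem f x hx, embMap_val_mem f y hy] at hval
    exact absurd (hval.symm ▸ (f.1 ⟨y.1, hy⟩).2) (newPt_not_mem T)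
  · have hx' := x.2
    have hy' := y.2
    rw [Finset.mem_insert] at hx' hy'
    exact Subtype.ext ((hx'.resolve_right hx).trans (hy'.resolve_right hy).symm)

/-- The self-embedding `ι : FI → FI`, sending `S` to `S ⊔ {∗}` (with the new point `∗`
re-encoded as a natural number not belonging to `S`) and sending an injection
`f : S → T` to the injection agreeing with `f` on `S` and sending `∗` to `∗`. -/
def selfEmb : FIcat ⥤ FIcat where
  obj S := ⟨insert (newPt S) S.carrier⟩
  map f := ⟨embMap f, embMap_injective f⟩
  map_id S := by
    apply Subtype.ext
    funext x
    apply Subtype.ext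
    by_cases h : x.1 ∈ S.carrier
    · rw [embMap_val_mem (𝟙 S) x h]
      rfl
    · rw [embMap_val_not_mem (𝟙 S) x h]
      have hx' := x.2
      rw [Finset.mem_insert] at hx'
      exact (hx'.resolve_right h).symm
  map_comp {S T U} f g := by
    apply Subtype.ext
    funext x
    apply Subtype.ext
    show (embMap (f ≫ g) x).1 = (embMap g (embMap f x)).1
    by_cases h : x.1 ∈ S.carrier
    · rw [embMap_val_mem (f ≫ g) x h]
      have h2 : (embMap f x).1 ∈ T.carrier := by
        rw [embMap_val_mem f x h]; exact (f.1 ⟨x.1, h⟩).2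
      rw [embMap_val_mem g _ h2]
      have heq : (⟨(embMap f x).1, h2⟩ : {a : ℕ // a ∈ T.carrier}) = f.1 ⟨x.1, h⟩ :=
        Subtype.ext (embMap_val_mem f x h)
      show ((g.1 (f.1 ⟨x.1, h⟩)) : ℕ) = ((g.1 ⟨(embMap f x).1, h2⟩) : ℕ)
      exact congrArg (fun t => ((g.1 t) : ℕ)) heq.symm
    · rw [embMap_val_not_mem (f ≫ g) x h]
      have h2 : (embMap f x).1 ∉ T.carrier := by
        rw [embMap_val_not_mem f x h]; exact newPt_not_mem T
      rw [embMap_val_not_mem g _ h2]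

/-- The object `{1, …, m}` of `FI`. -/
def stdObj (m : ℕ) : FIcat := ⟨Finset.Icc 1 m⟩

/-- The projective `FI`-module `P_m = k[FI({1,…,m}, -)]`, sending a finite set `S` to the
free `k`-vector space on the set of injections `{1,…,m} → S`. -/
noncomputable def Pmod (k : Type) [Field k] (m : ℕ) : FIcat ⥤ ModuleCat.{0} k :=
  coyoneda.obj (Opposite.op (stdObj m)) ⋙ ModuleCat.free k

instance (k : Type) [Field k] : HasFiniteBiproducts (FIcat ⥤ ModuleCat.{0} k) :=
  HasFiniteBiproducts.of_hasFiniteProducts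

instance (k : Type) [Field k] : HasBinaryBiproducts (FIcat ⥤ ModuleCat.{0} k) :=
  hasBinaryBiproducts_of_finite_biproducts _

section Aux

theorem mem_std {m x : ℕ} : x ∈ (stdObj m).carrier ↔ 1 ≤ x ∧ x ≤ m := Finset.mem_Icc

/-- The inclusion `S ⟶ S ⊔ {∗}`. -/
def FIincl (S : FIcat) : S ⟶ selfEmb.obj S :=
  ⟨fun x => ⟨x.1, Finset.mem_insert_of_mem x.2⟩,
   fun a b h => Subtype.ext (Subtype.mk_eq_mk.mp h)⟩

theorem FIincl_natural {S T : FIcat} (f : S ⟶ T) :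
    f ≫ FIincl T = FIincl S ≫ selfEmb.map f := by
  apply Subtype.ext; funext x; apply Subtype.ext
  show (f.1 x).1 = (embMap f ⟨x.1, _⟩).1
  rw [embMap_val_mem f _ x.2]

variable {m : ℕ}

/-- The element `i+1` of `{1,…,m}`. -/
def pivot (i : Fin m) : ((stdObj m).carrier : Type) :=
  ⟨i.1 + 1, by rw [mem_std]; omega⟩

/-- The order-embedding `{1,…,m-1} → {1,…,m}` missing `i+1`. -/
def sig (i : Fin m) : stdObj (m - 1) ⟶ stdObj m :=
  ⟨fun x => ⟨if x.1 < i.1 + 1 then x.1 else x.1 + 1, by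
      have hx := mem_std.mp x.2; have hi := i.2
      rw [mem_std]; split <;> omega⟩,
   fun a b h => by
      have h2 := congrArg Subtype.val h
      simp only at h2
      apply Subtype.ext
      split at h2 <;> split at h2 <;> omega⟩

theorem sig_ne_pivot (i : Fin m) (x) : ((sig i).1 x).1 ≠ (pivot i).1 := by
  show (if x.1 < i.1 + 1 then x.1 else x.1 + 1) ≠ i.1 + 1
  have hx := mem_std.mp x.2
  split <;> omega

/-- The inverse of `sig i` on `{1,…,m} \ {i+1}`. -/
def unsig (i : Fin m) (x : ((stdObj m).carrier : Type)) (hx : x.1 ≠ i.1 + 1) :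
    ((stdObj (m - 1)).carrier : Type) :=
  ⟨if x.1 < i.1 + 1 then x.1 else x.1 - 1, by
    have := mem_std.mp x.2; have := i.2; rw [mem_std]; split <;> omega⟩

theorem sig_unsig (i : Fin m) (x) (hx : x.1 ≠ i.1 + 1) :
    (sig i).1 (unsig i x hx) = x := by
  apply Subtype.ext
  have hm := mem_std.mp x.2
  show (if (if x.1 < i.1+1 then x.1 else x.1-1) < i.1 + 1 then (if x.1 < i.1+1 then x.1 else x.1-1) else (if x.1 < i.1+1 then x.1 else x.1-1) + 1) = x.1
  by_cases h1 : x.1 < i.1 + 1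
  · simp only [if_pos h1]
  · simp only [if_neg h1]
    rw [if_neg (by omega)]
    omega

theorem unsig_sig (i : Fin m) (x) (h) : unsig i ((sig i).1 x) h = x := by
  apply (sig i).2
  exact sig_unsig i _ h

end Aux

section Aux2

variable {m : ℕ} {S T : FIcat}

/-- Restriction of a morphism into `S ⊔ {∗}` avoiding `∗`. -/
def resAll (g : stdObj m ⟶ selfEmb.obj S) (hg : ∀ x, (g.1 x).1 ∈ S.carrier) :
    stdObj m ⟶ S :=
  ⟨fun x => ⟨(g.1 x).1, hg x⟩,
   fun a b h => g.2 (Subtype.ext (Subtype.mk_eq_mk.mp h))⟩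

theorem avoid_incl (h : stdObj m ⟶ S) (x) : (((h ≫ FIincl S).1 x).1 ∈ S.carrier) :=
  (h.1 x).2

theorem resAll_incl (h : stdObj m ⟶ S) : resAll (h ≫ FIincl S) (avoid_incl h) = h := by
  apply Subtype.ext; funext x; apply Subtype.ext; rfl

theorem incl_resAll (g : stdObj m ⟶ selfEmb.obj S) (hg) :
    resAll g hg ≫ FIincl S = g := by
  apply Subtype.ext; funext x; apply Subtype.ext; rfl

theorem avoid_map (f : S ⟶ T) (g : stdObj m ⟶ selfEmb.obj S) :
    (∀ x, (g.1 x).1 ∈ S.carrier) ↔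
      (∀ x, (((g ≫ selfEmb.map f).1 x).1 ∈ T.carrier)) := by
  constructor
  · intro hg x
    show ((embMap f (g.1 x)).1 ∈ T.carrier)
    rw [embMap_val_mem f _ (hg x)]
    exact (f.1 _).2
  · intro hg x
    by_contra hmem
    have := hg x
    rw [show (((g ≫ selfEmb.map f).1 x).1 = newPt T) from embMap_val_not_mem f _ hmem] at this
    exact newPt_not_mem T this

theorem resAll_map (f : S ⟶ T) (g : stdObj m ⟶ selfEmb.obj S) (hg) (hg') :
    resAll (g ≫ selfEmb.map f) hg' = resAll g hg ≫ f := by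
  apply Subtype.ext; funext x; apply Subtype.ext
  show (embMap f (g.1 x)).1 = (f.1 ((resAll g hg).1 x)).1
  rw [embMap_val_mem f _ (hg x)]
  rfl

/-- The underlying function of the extension of `h : {1,…,m-1} → S` to `{1,…,m} → S ⊔ {∗}`
sending `i+1` to `∗`. -/
def extFun (i : Fin m) (h : stdObj (m - 1) ⟶ S) (x : ((stdObj m).carrier : Type)) :
    (((selfEmb.obj S).carrier : Finset ℕ) : Type) :=
  if hx : x.1 = i.1 + 1 then ⟨newPt S, Finset.mem_insert_self _ _⟩
  else ⟨(h.1 (unsig i x hx)).1, Finset.mem_insert_of_mem (h.1 (unsig i x hx)).2⟩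

theorem extFun_val_pivot (i : Fin m) (h : stdObj (m - 1) ⟶ S) (x) (hx : x.1 = i.1 + 1) :
    (extFun i h x).1 = newPt S := by
  rw [extFun, dif_pos hx]

theorem extFun_val_ne (i : Fin m) (h : stdObj (m - 1) ⟶ S) (x) (hx : x.1 ≠ i.1 + 1) :
    (extFun i h x).1 = (h.1 (unsig i x hx)).1 := by
  rw [extFun, dif_neg hx]

theorem extFun_inj (i : Fin m) (h : stdObj (m - 1) ⟶ S) :
    Function.Injective (extFun i h) := by
  intro a b heq
  have hval : (extFun i h a).1 = (extFun i h b).1 := congrArg Subtype.val heq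
  by_cases ha : a.1 = i.1 + 1 <;> by_cases hb : b.1 = i.1 + 1
  · exact Subtype.ext (ha.trans hb.symm)
  · rw [extFun_val_pivot i h a ha, extFun_val_ne i h b hb] at hval
    exact absurd (hval ▸ (h.1 (unsig i b hb)).2) (newPt_not_mem S)
  · rw [extFun_val_ne i h a ha, extFun_val_pivot i h b hb] at hval
    exact absurd (hval.symm ▸ (h.1 (unsig i a ha)).2) (newPt_not_mem S)
  · rw [extFun_val_ne i h a ha, extFun_val_ne i h b hb] at hval
    have h2 : unsig i a ha = unsig i b hb := h.2 (Subtype.ext hval)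
    rw [← sig_unsig i a ha, ← sig_unsig i b hb, h2]

/-- Extension of `h : {1,…,m-1} → S` to `{1,…,m} → S ⊔ {∗}` sending `i+1` to `∗`. -/
def extMor (i : Fin m) (h : stdObj (m - 1) ⟶ S) : stdObj m ⟶ selfEmb.obj S :=
  ⟨extFun i h, extFun_inj i h⟩

theorem extMor_val_pivot (i : Fin m) (h : stdObj (m - 1) ⟶ S) (x) (hx : x.1 = i.1 + 1) :
    ((extMor i h).1 x).1 = newPt S := extFun_val_pivot i h x hx

theorem extMor_val_ne (i : Fin m) (h : stdObj (m - 1) ⟶ S) (x) (hx : x.1 ≠ i.1 + 1) :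
    ((extMor i h).1 x).1 = (h.1 (unsig i x hx)).1 := extFun_val_ne i h x hx

theorem hit_mem (i : Fin m) (g : stdObj m ⟶ selfEmb.obj S)
    (hg : (g.1 (pivot i)).1 = newPt S) (x) : (g.1 ((sig i).1 x)).1 ∈ S.carrier := by
  have hmem : (g.1 ((sig i).1 x)).1 ∈ insert (newPt S) S.carrier := (g.1 ((sig i).1 x)).2
  rw [Finset.mem_insert] at hmem
  rcases hmem with heq | hmem
  · exfalso
    have : (sig i).1 x = pivot i := g.2 (Subtype.ext (heq.trans hg.symm))
    exact sig_ne_pivot i x (congrArg Subtype.val this)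
  · exact hmem

/-- Restriction of a morphism hitting `∗` exactly at `i+1`. -/
def resPivot (i : Fin m) (g : stdObj m ⟶ selfEmb.obj S)
    (hg : (g.1 (pivot i)).1 = newPt S) : stdObj (m - 1) ⟶ S :=
  ⟨fun x => ⟨(g.1 ((sig i).1 x)).1, hit_mem i g hg x⟩,
   fun a b h => (sig i).2 (g.2 (Subtype.ext (Subtype.mk_eq_mk.mp h)))⟩

theorem extMor_hit (i : Fin m) (h : stdObj (m - 1) ⟶ S) :
    ((extMor i h).1 (pivot i)).1 = newPt S :=
  extMor_val_pivot i h _ rfl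

theorem resPivot_ext (i : Fin m) (h : stdObj (m - 1) ⟶ S) :
    resPivot i (extMor i h) (extMor_hit i h) = h := by
  apply Subtype.ext; funext x; apply Subtype.ext
  show ((extMor i h).1 ((sig i).1 x)).1 = (h.1 x).1
  rw [extMor_val_ne i h _ (sig_ne_pivot i x)]; exact congrArg (fun t => ((h.1 t) : ℕ)) (unsig_sig i x _)

theorem ext_resPivot (i : Fin m) (g : stdObj m ⟶ selfEmb.obj S) (hg) :
    extMor i (resPivot i g hg) = g := by
  apply Subtype.ext; funext x; apply Subtype.ext
  by_cases hx : x.1 = i.1 + 1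
  · rw [extMor_val_pivot i _ x hx]
    have : x = pivot i := Subtype.ext hx
    rw [this, hg]
  · rw [extMor_val_ne i _ x hx]
    show (g.1 ((sig i).1 (unsig i x hx))).1 = (g.1 x).1
    rw [sig_unsig]

theorem hit_map (f : S ⟶ T) (i : Fin m) (g : stdObj m ⟶ selfEmb.obj S) :
    (g.1 (pivot i)).1 = newPt S ↔
      ((g ≫ selfEmb.map f).1 (pivot i)).1 = newPt T := by
  constructor
  · intro hg
    show (embMap f (g.1 (pivot i))).1 = newPt T
    have hns : (g.1 (pivot i)).1 ∉ S.carrier := by rw [hg]; exact newPt_not_mem S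
    exact embMap_val_not_mem f _ hns
  · intro hg
    by_contra hne
    have hmem : (g.1 (pivot i)).1 ∈ S.carrier := by
      have h2 : (g.1 (pivot i)).1 ∈ insert (newPt S) S.carrier := (g.1 (pivot i)).2
      rw [Finset.mem_insert] at h2
      exact h2.resolve_left hne
    have h3 : ((g ≫ selfEmb.map f).1 (pivot i)).1 ∈ T.carrier := by
      show (embMap f (g.1 (pivot i))).1 ∈ T.carrier
      rw [embMap_val_mem f _ hmem]
      exact (f.1 _).2
    rw [hg] at h3
    exact newPt_not_mem T h3

theorem resPivot_map (f : S ⟶ T) (i : Fin m) (g : stdObj m ⟶ selfEmb.obj S) (hg) (hg') :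
    resPivot i (g ≫ selfEmb.map f) hg' = resPivot i g hg ≫ f := by
  apply Subtype.ext; funext x; apply Subtype.ext
  show (embMap f (g.1 ((sig i).1 x))).1 = (f.1 ((resPivot i g hg).1 x)).1
  rw [embMap_val_mem f _ (hit_mem i g hg x)]
  rfl

theorem extMor_map (f : S ⟶ T) (i : Fin m) (h : stdObj (m - 1) ⟶ S) :
    extMor i h ≫ selfEmb.map f = extMor i (h ≫ f) := by
  apply Subtype.ext; funext x; apply Subtype.ext
  show (embMap f ((extMor i h).1 x)).1 = ((extMor i (h ≫ f)).1 x).1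
  by_cases hx : x.1 = i.1 + 1
  · rw [extMor_val_pivot i (h ≫ f) x hx]
    have h1 : ((extMor i h).1 x).1 = newPt S := extMor_val_pivot i h x hx
    have h2 : ((extMor i h).1 x).1 ∉ S.carrier := h1 ▸ newPt_not_mem S
    exact embMap_val_not_mem f _ h2
  · rw [extMor_val_ne i (h ≫ f) x hx]
    have h1 : ((extMor i h).1 x).1 ∈ S.carrier := by
      rw [extMor_val_ne i h x hx]; exact (h.1 _).2
    rw [embMap_val_mem f _ h1]
    show (f.1 ⟨((extMor i h).1 x).1, h1⟩).1 = (f.1 (h.1 (unsig i x hx))).1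
    have heq : (⟨((extMor i h).1 x).1, h1⟩ : ((S.carrier : Finset ℕ) : Type)) =
        h.1 (unsig i x hx) := Subtype.ext (extMor_val_ne i h x hx)
    exact congrArg (fun t => (f.1 t : ℕ)) heq

end Aux2

section Aux3

open Finsupp

variable {k : Type} [Field k] {m : ℕ}

/-- The linear map between free modules determined by a map on basis elements. -/
noncomputable def fdesc {X Y : Type} (F : X → (Y →₀ k)) : (X →₀ k) →ₗ[k] (Y →₀ k) :=
  Finsupp.lift _ k _ F

theorem fdesc_single {X Y : Type} (F : X → (Y →₀ k)) (x : X) :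
    fdesc F (Finsupp.single x 1) = F x := by
  simp [fdesc]

theorem lhom_ext1 {X Y : Type} {f g : (X →₀ k) →ₗ[k] (Y →₀ k)}
    (h : ∀ a, f (Finsupp.single a 1) = g (Finsupp.single a 1)) : f = g := by
  apply Finsupp.lhom_ext
  intro a b
  have hb : (Finsupp.single a b : X →₀ k) = b • Finsupp.single a 1 := by
    rw [Finsupp.smul_single, smul_eq_mul, mul_one]
  rw [hb, map_smul, map_smul, h]

theorem Pmod_map_single {S T : FIcat} (f : S ⟶ T) (g : stdObj m ⟶ S) :
    ((Pmod k m).map f) (Finsupp.single g (1 : k)) = Finsupp.single (g ≫ f) 1 :=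
  Finsupp.mapDomain_single

theorem shiftPmod_map_single {S T : FIcat} (f : S ⟶ T) (g : stdObj m ⟶ selfEmb.obj S) :
    ((selfEmb ⋙ Pmod k m).map f) (Finsupp.single g (1 : k)) =
      Finsupp.single (g ≫ selfEmb.map f) 1 :=
  Finsupp.mapDomain_single

theorem MC_add_apply {M N : ModuleCat.{0} k} (f g : M ⟶ N) (x : M) :
    (f + g) x = f x + g x := rfl

theorem MC_sum_apply {ι : Type} (s : Finset ι) {M N : ModuleCat.{0} k}
    (f : ι → (M ⟶ N)) (x : M) : (∑ i ∈ s, f i) x = ∑ i ∈ s, f i x := by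
  classical
  induction s using Finset.induction with
  | empty => rfl
  | @insert a s h ih => rw [Finset.sum_insert h, Finset.sum_insert h, MC_add_apply, ih]

end Aux3

section Aux4

open Finsupp

variable (k : Type) [Field k] (m : ℕ)

/-- The projection `Σ P_m ⟶ P_m` killing basis morphisms that hit `∗`. -/
noncomputable def pT : (selfEmb ⋙ Pmod k m) ⟶ Pmod k m where
  app S := ModuleCat.ofHom <| fdesc fun g : stdObj m ⟶ selfEmb.obj S =>
    if hg : ∀ x, (g.1 x).1 ∈ S.carrier then Finsupp.single (resAll g hg) (1 : k) else 0
  naturality {S T} f := by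
    apply ModuleCat.hom_ext
    apply lhom_ext1
    intro g
    show (fdesc _) (((selfEmb ⋙ Pmod k m).map f) (Finsupp.single g 1)) =
      ((Pmod k m).map f) ((fdesc _) (Finsupp.single g 1))
    rw [shiftPmod_map_single, fdesc_single, fdesc_single]
    by_cases hg : ∀ x, (g.1 x).1 ∈ S.carrier
    · rw [dif_pos hg, dif_pos ((avoid_map f g).mp hg), Pmod_map_single,
        resAll_map f g hg ((avoid_map f g).mp hg)]
    · rw [dif_neg hg, dif_neg (fun h => hg ((avoid_map f g).mpr h))]; exact (map_zero ((Pmod k m).map f).hom).symm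

/-- The inclusion `P_m ⟶ Σ P_m`. -/
noncomputable def iT : Pmod k m ⟶ (selfEmb ⋙ Pmod k m) where
  app S := ModuleCat.ofHom <| fdesc fun h : stdObj m ⟶ S => Finsupp.single (h ≫ FIincl S) (1 : k)
  naturality {S T} f := by
    apply ModuleCat.hom_ext
    apply lhom_ext1
    intro h
    show (fdesc _) (((Pmod k m).map f) (Finsupp.single h 1)) =
      ((selfEmb ⋙ Pmod k m).map f) ((fdesc _) (Finsupp.single h 1))
    rw [Pmod_map_single, fdesc_single, fdesc_single, shiftPmod_map_single,
      Category.assoc, Category.assoc, FIincl_natural]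

/-- The projection `Σ P_m ⟶ P_{m-1}` extracting basis morphisms hitting `∗` at `i+1`. -/
noncomputable def qT (i : Fin m) : (selfEmb ⋙ Pmod k m) ⟶ Pmod k (m - 1) where
  app S := ModuleCat.ofHom <| fdesc fun g : stdObj m ⟶ selfEmb.obj S =>
    if hg : (g.1 (pivot i)).1 = newPt S then Finsupp.single (resPivot i g hg) (1 : k) else 0
  naturality {S T} f := by
    apply ModuleCat.hom_ext
    apply lhom_ext1
    intro g
    show (fdesc _) (((selfEmb ⋙ Pmod k m).map f) (Finsupp.single g 1)) =
      ((Pmod k (m - 1)).map f) ((fdesc _) (Finsupp.single g 1))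
    rw [shiftPmod_map_single, fdesc_single, fdesc_single]
    by_cases hg : (g.1 (pivot i)).1 = newPt S
    · rw [dif_pos hg, dif_pos ((hit_map f i g).mp hg), Pmod_map_single,
        resPivot_map f i g hg ((hit_map f i g).mp hg)]
    · rw [dif_neg hg, dif_neg (fun h => hg ((hit_map f i g).mpr h))]; exact (map_zero ((Pmod k (m - 1)).map f).hom).symm

/-- The inclusion `P_{m-1} ⟶ Σ P_m` extending a basis morphism by `i+1 ↦ ∗`. -/
noncomputable def jT (i : Fin m) : Pmod k (m - 1) ⟶ (selfEmb ⋙ Pmod k m) where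
  app S := ModuleCat.ofHom <| fdesc fun h : stdObj (m - 1) ⟶ S => Finsupp.single (extMor i h) (1 : k)
  naturality {S T} f := by
    apply ModuleCat.hom_ext
    apply lhom_ext1
    intro h
    show (fdesc _) (((Pmod k (m - 1)).map f) (Finsupp.single h 1)) =
      ((selfEmb ⋙ Pmod k m).map f) ((fdesc _) (Finsupp.single h 1))
    rw [Pmod_map_single, fdesc_single, fdesc_single, shiftPmod_map_single, extMor_map]

end Aux4

section Aux5

open Finsupp

variable (k : Type) [Field k] (m : ℕ)

theorem pT_app_single {S : FIcat} (g : stdObj m ⟶ selfEmb.obj S) :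
    (pT k m).app S (Finsupp.single g 1) =
      if hg : ∀ x, (g.1 x).1 ∈ S.carrier then Finsupp.single (resAll g hg) (1 : k) else 0 :=
  fdesc_single _ _

theorem iT_app_single {S : FIcat} (h : stdObj m ⟶ S) :
    (iT k m).app S (Finsupp.single h 1) = Finsupp.single (h ≫ FIincl S) (1 : k) :=
  fdesc_single _ _

theorem qT_app_single (i : Fin m) {S : FIcat} (g : stdObj m ⟶ selfEmb.obj S) :
    (qT k m i).app S (Finsupp.single g 1) =
      if hg : (g.1 (pivot i)).1 = newPt S then Finsupp.single (resPivot i g hg) (1 : k)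
      else 0 :=
  fdesc_single _ _

theorem jT_app_single (i : Fin m) {S : FIcat} (h : stdObj (m - 1) ⟶ S) :
    (jT k m i).app S (Finsupp.single h 1) = Finsupp.single (extMor i h) (1 : k) :=
  fdesc_single _ _

theorem iT_pT : iT k m ≫ pT k m = 𝟙 (Pmod k m) := by
  apply NatTrans.ext
  funext S
  apply ModuleCat.hom_ext
  apply lhom_ext1
  intro h
  show (pT k m).app S ((iT k m).app S (Finsupp.single h 1)) = Finsupp.single h 1
  rw [iT_app_single, pT_app_single, dif_pos (avoid_incl h), resAll_incl]

theorem iT_qT (l : Fin m) : iT k m ≫ qT k m l = 0 := by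
  apply NatTrans.ext
  funext S
  apply ModuleCat.hom_ext
  apply lhom_ext1
  intro h
  show (qT k m l).app S ((iT k m).app S (Finsupp.single h 1)) = 0
  rw [iT_app_single, qT_app_single]
  rw [dif_neg]
  · rfl
  intro hcon
  have : ((h ≫ FIincl S).1 (pivot l)).1 ∈ S.carrier := avoid_incl h _
  rw [hcon] at this
  exact newPt_not_mem S this

theorem jT_pT (i : Fin m) : jT k m i ≫ pT k m = 0 := by
  apply NatTrans.ext
  funext S
  apply ModuleCat.hom_ext
  apply lhom_ext1
  intro h
  show (pT k m).app S ((jT k m i).app S (Finsupp.single h 1)) = 0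
  rw [jT_app_single, pT_app_single]
  rw [dif_neg]
  · rfl
  intro hall
  have h1 := hall (pivot i)
  rw [extMor_hit i h] at h1
  exact newPt_not_mem S h1

theorem jT_qT_same (i : Fin m) : jT k m i ≫ qT k m i = 𝟙 (Pmod k (m - 1)) := by
  apply NatTrans.ext
  funext S
  apply ModuleCat.hom_ext
  apply lhom_ext1
  intro h
  show (qT k m i).app S ((jT k m i).app S (Finsupp.single h 1)) = Finsupp.single h 1
  rw [jT_app_single, qT_app_single, dif_pos (extMor_hit i h), resPivot_ext]

theorem jT_qT_ne (i l : Fin m) (hil : i ≠ l) : jT k m i ≫ qT k m l = 0 := by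
  apply NatTrans.ext
  funext S
  apply ModuleCat.hom_ext
  apply lhom_ext1
  intro h
  show (qT k m l).app S ((jT k m i).app S (Finsupp.single h 1)) = 0
  rw [jT_app_single, qT_app_single]
  rw [dif_neg]
  · rfl
  intro hcon
  have hne : (pivot l : ((stdObj m).carrier : Type)).1 ≠ i.1 + 1 := by
    show l.1 + 1 ≠ i.1 + 1
    intro hh
    exact hil (Fin.ext (by omega)).symm
  rw [extMor_val_ne i h (pivot l) hne] at hcon
  exact newPt_not_mem S (hcon ▸ (h.1 (unsig i (pivot l) hne)).2)

theorem key_sum :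
    pT k m ≫ iT k m + ∑ i : Fin m, qT k m i ≫ jT k m i = 𝟙 (selfEmb ⋙ Pmod k m) := by
  apply NatTrans.ext
  funext S
  apply ModuleCat.hom_ext
  apply lhom_ext1
  intro g
  show ((pT k m ≫ iT k m + ∑ i : Fin m, qT k m i ≫ jT k m i).app S) (Finsupp.single g 1) =
    Finsupp.single g 1
  rw [NatTrans.app_add, NatTrans.app_sum]; erw [MC_add_apply, MC_sum_apply]
  by_cases hg : ∀ x, (g.1 x).1 ∈ S.carrier
  · have h1 : (pT k m ≫ iT k m).app S (Finsupp.single g 1) = Finsupp.single g 1 := by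
      show (iT k m).app S ((pT k m).app S (Finsupp.single g 1)) = _
      rw [pT_app_single, dif_pos hg, iT_app_single, incl_resAll]
    simp only [h1]
    erw [Finset.sum_eq_zero, add_zero]
    intro i _
    show (jT k m i).app S ((qT k m i).app S (Finsupp.single g 1)) = 0
    rw [qT_app_single, dif_neg]
    · exact map_zero ((jT k m i).app S).hom
    intro hcon
    have := hg (pivot i)
    rw [hcon] at this
    exact newPt_not_mem S this
  · push_neg at hg
    obtain ⟨x₀, hx₀⟩ := hg
    have hx0val : (g.1 x₀).1 = newPt S := by
      have h2 : (g.1 x₀).1 ∈ insert (newPt S) S.carrier := (g.1 x₀).2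
      rw [Finset.mem_insert] at h2
      exact h2.resolve_right hx₀
    have hx0m := mem_std.mp x₀.2
    set i₀ : Fin m := ⟨x₀.1 - 1, by omega⟩ with hi₀
    have hpiv : pivot i₀ = x₀ := Subtype.ext (by show x₀.1 - 1 + 1 = x₀.1; omega)
    have hg₀ : (g.1 (pivot i₀)).1 = newPt S := by rw [hpiv]; exact hx0val
    have h1 : (pT k m ≫ iT k m).app S (Finsupp.single g 1) = 0 := by
      show (iT k m).app S ((pT k m).app S (Finsupp.single g 1)) = _
      rw [pT_app_single, dif_neg]
      · exact map_zero ((iT k m).app S).hom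
      intro hall
      exact hx₀ (hall x₀)
    simp only [h1]
    erw [zero_add]
    rw [Finset.sum_eq_single i₀]
    · show (jT k m i₀).app S ((qT k m i₀).app S (Finsupp.single g 1)) = _
      rw [qT_app_single, dif_pos hg₀, jT_app_single, ext_resPivot]
    · intro i _ hi
      show (jT k m i).app S ((qT k m i).app S (Finsupp.single g 1)) = 0
      rw [qT_app_single, dif_neg]
      · exact map_zero ((jT k m i).app S).hom
      intro hcon
      have heq : g.1 (pivot i) = g.1 (pivot i₀) := Subtype.ext (hcon.trans hg₀.symm)
      have : pivot i = pivot i₀ := g.2 heq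
      have hval : i.1 + 1 = i₀.1 + 1 := congrArg Subtype.val this
      exact hi (Fin.ext (by omega))
    · intro hmem
      exact absurd (Finset.mem_univ i₀) hmem

end Aux5



theorem shift_of_Pm (k : Type) [Field k] (m : ℕ) (hm : 1 ≤ m) :
    Nonempty ((selfEmb ⋙ Pmod k m) ≅
      (Pmod k m ⊞ (⨁ fun _ : Fin m => Pmod k (m - 1)))) := by
  refine ⟨⟨biprod.lift (pT k m) (biproduct.lift fun i => qT k m i),
    biprod.desc (iT k m) (biproduct.desc fun i => jT k m i), ?_, ?_⟩⟩
  · rw [biprod.lift_desc, biproduct.lift_desc]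
    exact key_sum k m
  · apply biprod.hom_ext'
    · apply biprod.hom_ext
      · simp [iT_pT]
      · apply biproduct.hom_ext
        intro l
        simp [iT_qT]
    · apply biproduct.hom_ext'
      intro i
      apply biprod.hom_ext
      · simp [jT_pT]
      · apply biproduct.hom_ext
        intro l
        by_cases h : i = l
        · subst h
          simp [jT_qT_same]
        · simp [jT_qT_ne k m i l h, biproduct.ι_π_ne _ h]
end
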